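/- Let f(x) = max{a_i^T x + b_i : i ∈ [p]} be a convex continuous piecewise linear function on ℝ^n with p > n+1. Then there exists a nonempty proper subset U ⊊ [p] such that for all x ∈ ℝ^n, Σ_{W ⊆ U, |W| even} max{a_i^T x + b_i : i ∈ [p] ∖ W} = Σ_{W ⊆ U, |W| odd} max{a_i^T x + b_i : i ∈ [p] ∖ W}. -/

import Mathlib

/-- Maximum of `v` over a finite set `S` (junk value `0` if `S = ∅`). -/
noncomputable def maxOnFin {ι : Type*} (S : Finset ι) (v : ι → ℝ) : ℝ :=
  if h : S.Nonempty then S.sup' h v else 0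

/-- `f ∈ MAX_n(p)`: `f` is a finite linear combination of maxima of (at most) `p`
affine functions. -/
def InMAX (n p : ℕ) (f : (Fin n → ℝ) → ℝ) : Prop :=
  ∃ (N : ℕ) (lam : Fin N → ℝ) (a : Fin N → Fin p → Fin n → ℝ) (b : Fin N → Fin p → ℝ),
    ∀ x, f x = ∑ j, lam j * maxOnFin Finset.univ (fun i => (∑ t, a j i t * x t) + b j i)

open Finset

lemma le_maxOn {ι : Type*} {S : Finset ι} {i : ι} (hi : i ∈ S) (v : ι → ℝ) :
    v i ≤ maxOnFin S v := by
  have hS : S.Nonempty := ⟨i, hi⟩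
  simp only [maxOnFin, dif_pos hS]
  exact le_sup' v hi

lemma maxOn_le_maxOn {ι : Type*} {S T : Finset ι} (hS : S.Nonempty) (hST : S ⊆ T) (v : ι → ℝ) :
    maxOnFin S v ≤ maxOnFin T v := by
  have hT : T.Nonempty := hS.mono hST
  simp only [maxOnFin, dif_pos hS, dif_pos hT]
  exact sup'_le _ _ fun i hi => le_sup' v (hST hi)

lemma maxOn_insert_of_le {ι : Type*} [DecidableEq ι] {S : Finset ι} (hS : S.Nonempty)
    {u : ι} {v : ι → ℝ} (h : v u ≤ maxOnFin S v) : maxOnFin (insert u S) v = maxOnFin S v := by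
  have h2 : (insert u S).Nonempty := insert_nonempty _ _
  simp only [maxOnFin, dif_pos hS, dif_pos h2]
  rw [sup'_insert]
  simp only [maxOnFin, dif_pos hS] at h
  exact max_eq_right h

lemma exists_dep (n p : ℕ) (hp : n + 1 < p) (a : Fin p → Fin n → ℝ) :
    ∃ μ : Fin p → ℝ, (∀ t, ∑ i, μ i * a i t = 0) ∧ (∑ i, μ i = 0) ∧ (∃ i, μ i ≠ 0) := by
  set v : Fin p → (Fin n → ℝ) × ℝ := fun i => (a i, 1) with hv
  have hnli : ¬ LinearIndependent ℝ v := by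
    intro h
    have := h.fintype_card_le_finrank
    simp [Module.finrank_prod] at this
    omega
  obtain ⟨g, hg, i0, hi0⟩ := Fintype.not_linearIndependent_iff.mp hnli
  refine ⟨g, ?_, ?_, ⟨i0, hi0⟩⟩
  · intro t
    have := congrFun (congrArg Prod.fst hg) t
    simp only [Prod.fst_sum, Prod.smul_fst, Finset.sum_apply, Pi.smul_apply, smul_eq_mul,
      hv, Prod.fst_zero, Pi.zero_apply] at this
    exact this
  · have := congrArg Prod.snd hg
    simp only [Prod.snd_sum, Prod.smul_snd, smul_eq_mul, hv, mul_one, Prod.snd_zero] at this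
    exact this

/-- let `f(x) = max{⟨a i, x⟩ + b i : i ∈ [p]}` be a convex CPWL function
on `ℝⁿ` with `p > n+1` pieces. Then there is a nonempty proper subset `U ⊊ [p]` with
`Σ_{W ⊆ U, |W| even} max{⟨a i, x⟩ + b i : i ∈ [p]∖W}
  = Σ_{W ⊆ U, |W| odd} max{⟨a i, x⟩ + b i : i ∈ [p]∖W}` for all `x`. -/
theorem even_odd_subset_identity (n p : ℕ) (hp : n + 1 < p)
    (a : Fin p → Fin n → ℝ) (b : Fin p → ℝ) (f : (Fin n → ℝ) → ℝ)
    (hf : ∀ x, f x = maxOnFin Finset.univ (fun i => (∑ t, a i t * x t) + b i)) :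
    ∃ U : Finset (Fin p), U.Nonempty ∧ U ≠ Finset.univ ∧ ∀ x : Fin n → ℝ,
      ∑ W ∈ U.powerset.filter (fun W => Even W.card),
          maxOnFin (Finset.univ \ W) (fun i => (∑ t, a i t * x t) + b i)
        = ∑ W ∈ U.powerset.filter (fun W => ¬Even W.card),
            maxOnFin (Finset.univ \ W) (fun i => (∑ t, a i t * x t) + b i) := by
  classical
  obtain ⟨μ, hμa, hμsum, hμne, hμb⟩ : ∃ μ : Fin p → ℝ, (∀ t, ∑ i, μ i * a i t = 0) ∧
      (∑ i, μ i = 0) ∧ (∃ i, μ i ≠ 0) ∧ (∑ i, μ i * b i ≤ 0) := by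
    obtain ⟨g, hga, hgs, hgne⟩ := exists_dep n p hp a
    by_cases hc : ∑ i, g i * b i ≤ 0
    · exact ⟨g, hga, hgs, hgne, hc⟩
    · obtain ⟨i0, hi0⟩ := hgne
      refine ⟨-g, fun t => ?_, ?_, ⟨i0, by simpa using hi0⟩, ?_⟩
      · simp only [Pi.neg_apply, neg_mul, Finset.sum_neg_distrib, hga t, neg_zero]
      · simp [Finset.sum_neg_distrib, hgs]
      · simp only [Pi.neg_apply, neg_mul, Finset.sum_neg_distrib]
        linarith
  set U : Finset (Fin p) := univ.filter (fun i => 0 < μ i) with hUdef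
  have hUpos : ∀ i ∈ U, 0 < μ i := fun i hi => (mem_filter.mp hi).2
  have hUneg : ∀ i ∈ univ \ U, μ i ≤ 0 := by
    intro i hi
    have := (mem_sdiff.mp hi).2
    simp only [hUdef, mem_filter, mem_univ, true_and] at this
    linarith [not_lt.mp this]
  have hUne : U.Nonempty := by
    by_contra h
    obtain ⟨i0, hi0⟩ := hμne
    have hall : ∀ i ∈ (univ : Finset (Fin p)), μ i ≤ 0 := by
      intro i _
      by_contra hpos
      exact h ⟨i, mem_filter.mpr ⟨mem_univ i, lt_of_not_ge hpos⟩⟩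
    exact hi0 ((Finset.sum_eq_zero_iff_of_nonpos hall).mp hμsum i0 (mem_univ i0))
  obtain ⟨j, hj⟩ : ∃ j, μ j < 0 := by
    by_contra h
    push_neg at h
    obtain ⟨u, hu⟩ := hUne
    have := (Finset.sum_eq_zero_iff_of_nonneg (fun i _ => h i)).mp hμsum u (mem_univ u)
    exact absurd this (ne_of_gt (hUpos u hu))
  have hjU : j ∈ univ \ U := by
    simp only [hUdef, mem_sdiff, mem_univ, mem_filter, true_and]
    intro h; linarith
  have hUproper : U ≠ univ := by
    intro h
    rw [h] at hjU
    simp at hjU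
  refine ⟨U, hUne, hUproper, fun x => ?_⟩
  set gx : Fin p → ℝ := fun i => (∑ t, a i t * x t) + b i with hgx
  -- the total weighted sum is nonpositive
  have hsum : ∑ i, μ i * gx i ≤ 0 := by
    have h1 : ∑ i, μ i * ∑ t, a i t * x t = 0 := by
      have : ∑ i, μ i * ∑ t, a i t * x t = ∑ t, (∑ i, μ i * a i t) * x t := by
        simp_rw [Finset.mul_sum, Finset.sum_mul]
        rw [Finset.sum_comm]
        apply Finset.sum_congr rfl
        intro t _
        apply Finset.sum_congr rfl
        intro i _
        ring
      rw [this]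
      simp [hμa]
    calc ∑ i, μ i * gx i = ∑ i, (μ i * ∑ t, a i t * x t + μ i * b i) := by
          apply Finset.sum_congr rfl; intro i _; simp only [hgx]; ring
      _ = (∑ i, μ i * ∑ t, a i t * x t) + ∑ i, μ i * b i := Finset.sum_add_distrib
      _ ≤ 0 := by rw [h1]; linarith
  set S : ℝ := ∑ i ∈ U, μ i with hSdef
  have hSpos : 0 < S := Finset.sum_pos hUpos hUne
  have hsplit : ∑ i ∈ univ \ U, μ i * gx i + ∑ i ∈ U, μ i * gx i = ∑ i, μ i * gx i :=
    Finset.sum_sdiff (filter_subset _ _)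
  have hsplit2 : ∑ i ∈ univ \ U, μ i + ∑ i ∈ U, μ i = 0 := by
    rw [Finset.sum_sdiff (filter_subset _ _)]; exact hμsum
  have hcUne : (univ \ U).Nonempty := ⟨j, hjU⟩
  set M : ℝ := maxOnFin (univ \ U) gx with hMdef
  -- key claim: some u ∈ U has gx u ≤ M
  obtain ⟨u, huU, hu⟩ : ∃ u ∈ U, gx u ≤ M := by
    by_contra h
    push_neg at h
    have h2 : ∑ i ∈ univ \ U, (- μ i) * gx i ≤ ∑ i ∈ univ \ U, (- μ i) * M := by
      apply Finset.sum_le_sum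
      intro i hi
      exact mul_le_mul_of_nonneg_left (le_maxOn hi gx) (by linarith [hUneg i hi])
    have h3 : ∑ i ∈ univ \ U, (- μ i) * M = S * M := by
      rw [← Finset.sum_mul, Finset.sum_neg_distrib]
      congr 1
      linarith
    have h4 : ∑ i ∈ U, μ i * M < ∑ i ∈ U, μ i * gx i := by
      apply Finset.sum_lt_sum_of_nonempty hUne
      intro i hi
      exact mul_lt_mul_of_pos_left (h i hi) (hUpos i hi)
    have h5 : ∑ i ∈ U, μ i * M = S * M := by rw [← Finset.sum_mul]
    have h6 : ∑ i ∈ univ \ U, (- μ i) * gx i = - ∑ i ∈ univ \ U, μ i * gx i := by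
      simp [Finset.sum_neg_distrib]
    linarith
  -- the key insertion lemma
  have hins : ∀ V : Finset (Fin p), V ⊆ U → u ∉ V →
      maxOnFin (univ \ V) gx = maxOnFin (univ \ insert u V) gx := by
    intro V hV huV
    have hVU : insert u V ⊆ U := insert_subset huU hV
    have hmono : univ \ U ⊆ univ \ insert u V := Finset.sdiff_subset_sdiff (Subset.refl _) hVU
    have hne : (univ \ insert u V).Nonempty := hcUne.mono hmono
    have hgu : gx u ≤ maxOnFin (univ \ insert u V) gx :=
      le_trans hu (maxOn_le_maxOn hcUne hmono gx)
    have hset : univ \ V = insert u (univ \ insert u V) := by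
      ext i
      simp only [mem_sdiff, mem_univ, true_and, mem_insert, not_or]
      by_cases hiu : i = u
      · subst hiu; tauto
      · tauto
    rw [hset, maxOn_insert_of_le hne hgu]
  set φ : Finset (Fin p) → Finset (Fin p) :=
    fun W => if u ∈ W then W.erase u else insert u W with hφdef
  have hφsub : ∀ W ⊆ U, φ W ⊆ U := by
    intro W hW
    by_cases h : u ∈ W
    · simp only [hφdef, if_pos h]
      exact (erase_subset _ _).trans hW
    · simp only [hφdef, if_neg h]
      exact insert_subset huU hW
  have hφcard : ∀ W : Finset (Fin p), Even (φ W).card ↔ ¬ Even W.card := by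
    intro W
    by_cases h : u ∈ W
    · simp only [hφdef, if_pos h]
      have hc := Finset.card_erase_add_one h
      rw [← hc, Nat.even_add_one]
      tauto
    · simp only [hφdef, if_neg h, Finset.card_insert_of_notMem h, Nat.even_add_one]
  have hφφ : ∀ W : Finset (Fin p), φ (φ W) = W := by
    intro W
    by_cases h : u ∈ W
    · simp only [hφdef, if_pos h, if_neg (Finset.notMem_erase u W)]
      exact Finset.insert_erase h
    · rw [hφdef]
      simp only [if_neg h, Finset.mem_insert_self, if_pos]
      exact Finset.erase_insert h
  have hφF : ∀ W ⊆ U, maxOnFin (univ \ φ W) gx = maxOnFin (univ \ W) gx := by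
    intro W hW
    by_cases h : u ∈ W
    · simp only [hφdef, if_pos h]
      have h1 := hins (W.erase u) ((erase_subset _ _).trans hW) (Finset.notMem_erase u W)
      rw [Finset.insert_erase h] at h1
      exact h1
    · simp only [hφdef, if_neg h]
      exact (hins W hW h).symm
  refine Finset.sum_bij' (fun W _ => φ W) (fun W _ => φ W) ?_ ?_ ?_ ?_ ?_
  · intro W hW
    rw [mem_filter, mem_powerset] at hW ⊢
    exact ⟨hφsub W hW.1, by rw [hφcard]; tauto⟩
  · intro W hW
    rw [mem_filter, mem_powerset] at hW ⊢
    refine ⟨hφsub W hW.1, ?_⟩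
    have := hφcard W
    tauto
  · intro W _; exact hφφ W
  · intro W _; exact hφφ W
  · intro W hW
    rw [mem_filter, mem_powerset] at hW
    exact (hφF W hW.1).symm
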